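/- Suppose for each i ∈ [n] the function x ↦ ∇_i J_i(x) satisfies: |∇_i J_i(x_i, x_{-i}) − ∇_i J_i(y_i, x_{-i})| ≤ L_i |x_i − y_i| for all x_i, y_i ∈ Ω_i and all x_{-i}, and |∇_i J_i(x_i, x_{-i}) − ∇_i J_i(x_i, y_{-i})| ≤ L_{-i} ‖x_{-i} − y_{-i}‖ for all x_i ∈ Ω_i and all x_{-i}, y_{-i}. Define the pseudo-gradient estimation F: Ω_a → ℝ^{n×n} by F(X) being the diagonal matrix with i-th diagonal entry ∇_i J_i(X_i), where X_i is the i-th row of X. Then F is Lipschitz continuous on Ω_a in the Frobenius norm with constant L = max_{i∈[n]} √(L_i² + L_{-i}²). -/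
import Mathlib


open Finset

/-- Frobenius inner product on real `n × n` matrices. -/
def frobInner {n : ℕ} (A B : Matrix (Fin n) (Fin n) ℝ) : ℝ :=
  ∑ i, ∑ j, A i j * B i j

/-- Frobenius norm on real `n × n` matrices. -/
noncomputable def frobNorm {n : ℕ} (A : Matrix (Fin n) (Fin n) ℝ) : ℝ :=
  Real.sqrt (frobInner A A)

/-- Lemma 1: if each `∇_i J_i` (given here as `g i`) is
`L_i`-Lipschitz in its own variable `x_i ∈ Ω_i` and `L_{-i}`-Lipschitz in the
other players' variables `x_{-i}`, then the pseudo-gradient estimation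
`F(X) = diag(∇_1 J_1(X_1), …, ∇_n J_n(X_n))` (with `X_i` the `i`-th row of `X`)
is Lipschitz on the augmented set `Ω_a = {X : diag(X) ∈ Ω}` in the Frobenius
norm, with constant `L = max_i √(L_i² + L_{-i}²)`. -/
theorem stmt_2 {n : ℕ} [NeZero n]
    (Ω : Fin n → Set ℝ) (hΩ : ∀ i, Convex ℝ (Ω i) ∧ IsClosed (Ω i))
    (g : Fin n → (Fin n → ℝ) → ℝ)
    (Li Lmi : Fin n → ℝ) (hLi : ∀ i, 0 ≤ Li i) (hLmi : ∀ i, 0 ≤ Lmi i)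
    (hlipOwn : ∀ i, ∀ x y : Fin n → ℝ, x i ∈ Ω i → y i ∈ Ω i →
      (∀ j, j ≠ i → x j = y j) → |g i x - g i y| ≤ Li i * |x i - y i|)
    (hlipOther : ∀ i, ∀ x y : Fin n → ℝ, x i ∈ Ω i → x i = y i →
      |g i x - g i y| ≤ Lmi i * Real.sqrt (∑ j ∈ Finset.univ.erase i, (x j - y j) ^ 2)) :
    ∀ X Y : Matrix (Fin n) (Fin n) ℝ,
      (∀ i, X i i ∈ Ω i) → (∀ i, Y i i ∈ Ω i) →
      frobNorm (Matrix.diagonal (fun i => g i (X i)) -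
          Matrix.diagonal (fun i => g i (Y i))) ≤
        (Finset.univ.sup' Finset.univ_nonempty fun i =>
            Real.sqrt (Li i ^ 2 + Lmi i ^ 2)) *
          frobNorm (X - Y) := by
  intro X Y hX hY
  set L := (Finset.univ.sup' Finset.univ_nonempty fun i =>
      Real.sqrt (Li i ^ 2 + Lmi i ^ 2)) with hLdef
  have hLnn : 0 ≤ L := by
    obtain ⟨i⟩ := (inferInstance : Nonempty (Fin n))
    rw [hLdef]
    exact le_trans (Real.sqrt_nonneg _) (Finset.le_sup' (fun i => Real.sqrt (Li i ^ 2 + Lmi i ^ 2)) (Finset.mem_univ i))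
  have key : ∀ i, (g i (X i) - g i (Y i)) ^ 2 ≤
      L ^ 2 * ∑ j, (X i j - Y i j) ^ 2 := by
    intro i
    set a := X i i - Y i i with ha
    set s := ∑ j ∈ Finset.univ.erase i, (X i j - Y i j) ^ 2 with hs
    have hsnn : 0 ≤ s := Finset.sum_nonneg fun _ _ => sq_nonneg _
    set z := Function.update (X i) i (Y i i) with hz
    have hz_i : z i = Y i i := Function.update_self _ _ _
    have h1 : |g i (X i) - g i z| ≤ Li i * |a| := by
      have := hlipOwn i (X i) z (hX i) (by rw [hz_i]; exact hY i)
        (fun j hj => (Function.update_of_ne hj _ _).symm)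
      simpa [hz_i, ha] using this
    have h2 : |g i z - g i (Y i)| ≤ Lmi i * Real.sqrt s := by
      have h := hlipOther i z (Y i) (by rw [hz_i]; exact hY i) hz_i
      have he : ∑ j ∈ Finset.univ.erase i, (z j - Y i j) ^ 2 = s := by
        refine Finset.sum_congr rfl fun j hj => ?_
        rw [hz, Function.update_of_ne (Finset.ne_of_mem_erase hj)]
      rwa [he] at h
    have htot : |g i (X i) - g i (Y i)| ≤ Li i * |a| + Lmi i * Real.sqrt s :=
      le_trans (abs_sub_le _ (g i z) _) (add_le_add h1 h2)
    have hTsum : a ^ 2 + s = ∑ j, (X i j - Y i j) ^ 2 := by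
      rw [ha, hs]
      exact Finset.add_sum_erase _ (fun j => (X i j - Y i j) ^ 2) (Finset.mem_univ i)
    have hTnn : 0 ≤ a ^ 2 + s := add_nonneg (sq_nonneg _) hsnn
    have hcs : Li i * |a| + Lmi i * Real.sqrt s ≤
        Real.sqrt ((Li i ^ 2 + Lmi i ^ 2) * (a ^ 2 + s)) := by
      rw [show Li i * |a| + Lmi i * Real.sqrt s =
          Real.sqrt ((Li i * |a| + Lmi i * Real.sqrt s) ^ 2) from
        (Real.sqrt_sq (add_nonneg (mul_nonneg (hLi i) (abs_nonneg a))
          (mul_nonneg (hLmi i) (Real.sqrt_nonneg s)))).symm]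
      apply Real.sqrt_le_sqrt
      have hss : Real.sqrt s ^ 2 = s := Real.sq_sqrt hsnn
      have haa : |a| ^ 2 = a ^ 2 := sq_abs a
      nlinarith [sq_nonneg (Li i * Real.sqrt s - Lmi i * |a|), hLi i, hLmi i,
        abs_nonneg a, Real.sqrt_nonneg s]
    have hsub : Real.sqrt (Li i ^ 2 + Lmi i ^ 2) ≤ L := by
      rw [hLdef]
      exact Finset.le_sup' (fun i => Real.sqrt (Li i ^ 2 + Lmi i ^ 2)) (Finset.mem_univ i)
    have hd : |g i (X i) - g i (Y i)| ≤ L * Real.sqrt (a ^ 2 + s) := by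
      calc |g i (X i) - g i (Y i)| ≤ Li i * |a| + Lmi i * Real.sqrt s := htot
        _ ≤ Real.sqrt ((Li i ^ 2 + Lmi i ^ 2) * (a ^ 2 + s)) := hcs
        _ = Real.sqrt (Li i ^ 2 + Lmi i ^ 2) * Real.sqrt (a ^ 2 + s) :=
            Real.sqrt_mul (by positivity) _
        _ ≤ L * Real.sqrt (a ^ 2 + s) :=
            mul_le_mul_of_nonneg_right hsub (Real.sqrt_nonneg _)
    have := pow_le_pow_left₀ (abs_nonneg _) hd 2
    rw [sq_abs, mul_pow, Real.sq_sqrt hTnn, hTsum] at this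
    exact this
  have hfrob1 : frobNorm (Matrix.diagonal (fun i => g i (X i)) -
      Matrix.diagonal (fun i => g i (Y i))) =
      Real.sqrt (∑ i, (g i (X i) - g i (Y i)) ^ 2) := by
    unfold frobNorm frobInner
    congr 1
    refine Finset.sum_congr rfl fun i _ => ?_
    rw [Finset.sum_eq_single i]
    · simp [Matrix.sub_apply, Matrix.diagonal_apply_eq, sq]
    · intro j _ hj
      simp [Matrix.sub_apply, Matrix.diagonal_apply_ne' _ hj]
    · simp
  have hfrob2 : frobNorm (X - Y) =
      Real.sqrt (∑ i, ∑ j, (X i j - Y i j) ^ 2) := by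
    unfold frobNorm frobInner
    congr 1
    refine Finset.sum_congr rfl fun i _ => Finset.sum_congr rfl fun j _ => ?_
    simp [Matrix.sub_apply, sq]
  rw [hfrob1, hfrob2]
  calc Real.sqrt (∑ i, (g i (X i) - g i (Y i)) ^ 2)
      ≤ Real.sqrt (L ^ 2 * ∑ i, ∑ j, (X i j - Y i j) ^ 2) := by
        apply Real.sqrt_le_sqrt
        rw [Finset.mul_sum]
        exact Finset.sum_le_sum fun i _ => key i
    _ = L * Real.sqrt (∑ i, ∑ j, (X i j - Y i j) ^ 2) := by
        rw [Real.sqrt_mul (sq_nonneg L), Real.sqrt_sq hLnn]
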